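/- arXiv:2306.12730 — 2 statements merged into one kernel-verified Lean document; each statement's English description precedes it below -/
import Mathlib

section
/- Under the setting of the ℓ₂-estimation lemma (G with GᵀG = nI_d, C = G*G*ᵀ + Δ, tr(GᵀCG) ≥ tr(G*ᵀCG*)), every singular value σ_l(G*ᵀG), l = 1,…,d, satisfies n − 8d‖Δ‖²/n ≤ σ_l(G*ᵀG) ≤ n. -/
open Matrix

/-- The Frobenius norm of a real matrix. -/
noncomputable def frobNorm {m n : Type*} [Fintype m] [Fintype n]
    (A : Matrix m n ℝ) : ℝ :=
  Real.sqrt (∑ i, ∑ j, (A i j) ^ 2)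

/-- The nuclear norm of a real square matrix. -/
noncomputable def nuclearNorm {d : ℕ} (M : Matrix (Fin d) (Fin d) ℝ) : ℝ :=
  ∑ i, Real.sqrt ((Matrix.isHermitian_conjTranspose_mul_self M).eigenvalues i)

/-- The operator (spectral) norm of a real square matrix. -/
noncomputable def opNorm {m : Type*} [Fintype m] [DecidableEq m]
    (A : Matrix m m ℝ) : ℝ :=
  ‖Matrix.toEuclideanCLM (𝕜 := ℝ) A‖

/-- The `i`-th `d × d` block of a block-column matrix `X ∈ ℝ^{nd×d}`. -/
def blk {n d : ℕ} (X : Matrix (Fin n × Fin d) (Fin d) ℝ) (i : Fin n) :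
    Matrix (Fin d) (Fin d) ℝ :=
  Matrix.of fun a b => X (i, a) b

/-- The singular values of a real square matrix `M`: square roots of the eigenvalues
of `MᴴM`. -/
noncomputable def singularValues {d : ℕ} (M : Matrix (Fin d) (Fin d) ℝ) : Fin d → ℝ :=
  fun i => Real.sqrt ((Matrix.isHermitian_conjTranspose_mul_self M).eigenvalues i)


noncomputable def opNorm' {m : Type*} [Fintype m] [DecidableEq m]
    (A : Matrix m m ℝ) : ℝ :=
  ‖Matrix.toEuclideanCLM (𝕜 := ℝ) A‖

section quad
variable {m : Type*} [Fintype m] [DecidableEq m]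

lemma inner_toEuclideanCLM (A : Matrix m m ℝ) (x : EuclideanSpace ℝ m) :
    (inner ℝ x (Matrix.toEuclideanCLM (𝕜 := ℝ) A x) : ℝ) = (x : m → ℝ) ⬝ᵥ (A *ᵥ (x : m → ℝ)) := by
  have h : (WithLp.equiv 2 (m → ℝ)) (Matrix.toEuclideanCLM (𝕜 := ℝ) A x)
      = A *ᵥ (WithLp.equiv 2 (m → ℝ) x) := by
    simp [Matrix.ofLp_toEuclideanCLM, Matrix.toLin'_apply]
  simp only [PiLp.inner_apply, RCLike.inner_apply, conj_trivial, dotProduct]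
  exact Finset.sum_congr rfl fun i _ => by rw [show ((toEuclideanCLM (𝕜 := ℝ) A) x) i = (A *ᵥ x) i from congr_fun h i, mul_comm]

lemma opNorm_nonneg' (A : Matrix m m ℝ) : 0 ≤ opNorm' A := norm_nonneg _

/-- quadratic form bound by operator norm -/
lemma quad_le_opNorm (A : Matrix m m ℝ) (x : m → ℝ) :
    |x ⬝ᵥ (A *ᵥ x)| ≤ opNorm' A * (∑ k, x k ^ 2) := by
  set x' : EuclideanSpace ℝ m := (WithLp.equiv 2 (m → ℝ)).symm x with hx'
  have hxx : (x' : m → ℝ) = x := rfl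
  have h1 : x ⬝ᵥ (A *ᵥ x) = (inner ℝ x' (Matrix.toEuclideanCLM (𝕜 := ℝ) A x') : ℝ) := by
    rw [_root_.inner_toEuclideanCLM, hxx]
  have h2 : ‖x'‖ ^ 2 = ∑ k, x k ^ 2 := by
    rw [EuclideanSpace.norm_eq]
    rw [Real.sq_sqrt (by positivity)]
    exact Finset.sum_congr rfl fun i _ => by rw [Real.norm_eq_abs, sq_abs]; rfl
  calc |x ⬝ᵥ (A *ᵥ x)| = |(inner ℝ x' (Matrix.toEuclideanCLM (𝕜 := ℝ) A x') : ℝ)| := by rw [h1]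
    _ ≤ ‖x'‖ * ‖Matrix.toEuclideanCLM (𝕜 := ℝ) A x'‖ := abs_real_inner_le_norm _ _
    _ ≤ ‖x'‖ * (‖Matrix.toEuclideanCLM (𝕜 := ℝ) A‖ * ‖x'‖) := by
        gcongr; exact ContinuousLinearMap.le_opNorm _ _
    _ = opNorm' A * ‖x'‖ ^ 2 := by rw [opNorm']; ring
    _ = opNorm' A * (∑ k, x k ^ 2) := by rw [h2]

end quad

section rank
variable {m : Type*} [Fintype m] [DecidableEq m]

lemma matrix_rank_add_le (A B : Matrix m m ℝ) : (A + B).rank ≤ A.rank + B.rank := by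
  rw [Matrix.rank, Matrix.rank, Matrix.rank]
  have h : LinearMap.range (A + B).mulVecLin ≤
      LinearMap.range A.mulVecLin ⊔ LinearMap.range B.mulVecLin := by
    rintro _ ⟨x, rfl⟩
    rw [Matrix.mulVecLin_add]
    exact Submodule.add_mem_sup (LinearMap.mem_range_self _ x) (LinearMap.mem_range_self _ x)
  exact le_trans (Submodule.finrank_mono h)
    (Submodule.finrank_add_le_finrank_add_finrank _ _)

end rank

section spec
variable {m : Type*} [Fintype m] [DecidableEq m]
variable {B : Matrix m m ℝ} (hB : B.IsHermitian)


lemma trace_mul_self_eq_sum_sq :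
    Matrix.trace (B * B) = ∑ i, hB.eigenvalues i ^ 2 := by
  set U : Matrix m m ℝ := (hB.eigenvectorUnitary : Matrix m m ℝ) with hUdef
  have hU2 : U * star U = 1 := Unitary.coe_mul_star_self hB.eigenvectorUnitary
  have key : star U * B * U = diagonal (RCLike.ofReal ∘ hB.eigenvalues) :=
    by have := hB.conjStarAlgAut_star_eigenvectorUnitary; rwa [Unitary.conjStarAlgAut_star_apply] at this
  have h1 : (star U * B * U) * (star U * B * U) = star U * (B * B) * U := by
    calc (star U * B * U) * (star U * B * U) = star U * B * (U * star U) * B * U := by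
          simp only [Matrix.mul_assoc]
      _ = star U * (B * B) * U := by rw [hU2]; simp only [Matrix.mul_assoc, Matrix.one_mul]
  have h2 : Matrix.trace (star U * (B * B) * U) = Matrix.trace (B * B) := by
    rw [Matrix.trace_mul_comm, ← Matrix.mul_assoc, hU2, Matrix.one_mul]
  rw [← h2, ← h1, key]
  simp [Matrix.diagonal_mul_diagonal, Matrix.trace_diagonal, Function.comp, pow_two]

lemma trace_eq_sum_eigenvalues :
    Matrix.trace B = ∑ i, hB.eigenvalues i := by
  set U : Matrix m m ℝ := (hB.eigenvectorUnitary : Matrix m m ℝ) with hUdef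
  have hU2 : U * star U = 1 := Unitary.coe_mul_star_self hB.eigenvectorUnitary
  have key : star U * B * U = diagonal (RCLike.ofReal ∘ hB.eigenvalues) :=
    by have := hB.conjStarAlgAut_star_eigenvectorUnitary; rwa [Unitary.conjStarAlgAut_star_apply] at this
  have h2 : Matrix.trace (star U * B * U) = Matrix.trace B := by
    rw [Matrix.trace_mul_comm, ← Matrix.mul_assoc, hU2, Matrix.one_mul]
  rw [← h2, key]
  simp [Matrix.trace_diagonal, Function.comp]

/-- trace of `Δ * B` as a weighted sum of quadratic forms of eigenvectors. -/
lemma trace_mul_eq_sum_quad (Δ : Matrix m m ℝ) :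
    Matrix.trace (Δ * B) = ∑ i, hB.eigenvalues i *
      ((fun k => hB.eigenvectorBasis i k) ⬝ᵥ (Δ *ᵥ fun k => hB.eigenvectorBasis i k)) := by
  set U : Matrix m m ℝ := (hB.eigenvectorUnitary : Matrix m m ℝ) with hUdef
  nth_rewrite 1 [hB.spectral_theorem]
  rw [Unitary.conjStarAlgAut_apply, ← hUdef]
  have h1 : Matrix.trace (Δ * (U * diagonal (RCLike.ofReal ∘ hB.eigenvalues) * star U))
      = Matrix.trace ((star U * Δ * U) * diagonal (RCLike.ofReal ∘ hB.eigenvalues)) := by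
    rw [Matrix.trace_mul_comm]
    have hsplit : U * diagonal (RCLike.ofReal ∘ hB.eigenvalues) * star U * Δ
        = (U * diagonal (RCLike.ofReal ∘ hB.eigenvalues)) * (star U * Δ) := by
      simp only [Matrix.mul_assoc]
    rw [hsplit, Matrix.trace_mul_comm]
    simp only [Matrix.mul_assoc]
  rw [h1]
  rw [Matrix.trace]
  simp only [Matrix.diag_apply, Matrix.mul_diagonal, Function.comp]
  refine Finset.sum_congr rfl fun i _ => ?_
  have hentry : (star U * Δ * U) i i
      = (fun k => hB.eigenvectorBasis i k) ⬝ᵥ (Δ *ᵥ fun k => hB.eigenvectorBasis i k) := by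
    simp only [Matrix.mul_apply, Matrix.star_apply, dotProduct, Matrix.mulVec, dotProduct,
      hUdef, Matrix.IsHermitian.eigenvectorUnitary_apply, star_trivial,
      Finset.sum_mul, Finset.mul_sum]
    rw [Finset.sum_comm]
    refine Finset.sum_congr rfl fun k _ => Finset.sum_congr rfl fun l _ => by
      show hB.eigenvectorBasis i k * Δ k l * hB.eigenvectorBasis i l = _
      ring
  rw [hentry, RCLike.ofReal_real_eq_id]
  exact mul_comm _ _

end spec

section key
variable {m : Type*} [Fintype m] [DecidableEq m]

lemma eigvec_sq_sum {B : Matrix m m ℝ} (hB : B.IsHermitian) (i : m) :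
    ∑ k, (hB.eigenvectorBasis i k) ^ 2 = 1 := by
  have h := hB.eigenvectorBasis.orthonormal.1 i
  have h2 := EuclideanSpace.norm_eq (hB.eigenvectorBasis i)
  rw [h] at h2
  have h3 := congrArg (· ^ 2) h2.symm
  simp only [one_pow] at h3
  rw [Real.sq_sqrt (by positivity)] at h3
  rw [← h3]
  exact Finset.sum_congr rfl fun k _ => by rw [Real.norm_eq_abs, sq_abs]

lemma key_trace_bound (B Δ : Matrix m m ℝ) (hB : B.IsHermitian) (r : ℕ) (hr : B.rank ≤ r) :
    Matrix.trace (Δ * B) ≤ opNorm' Δ * (Real.sqrt r * Real.sqrt (Matrix.trace (B * B))) := by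
  classical
  set lam := hB.eigenvalues with hlam
  have hq : ∀ i, |(fun k => hB.eigenvectorBasis i k) ⬝ᵥ (Δ *ᵥ fun k => hB.eigenvectorBasis i k)|
      ≤ opNorm' Δ := by
    intro i
    have := quad_le_opNorm Δ (fun k => hB.eigenvectorBasis i k)
    rwa [eigvec_sq_sum hB i, mul_one] at this
  rw [trace_mul_eq_sum_quad hB Δ]
  have step1 : ∑ i, lam i * ((fun k => hB.eigenvectorBasis i k) ⬝ᵥ (Δ *ᵥ fun k =>
      hB.eigenvectorBasis i k)) ≤ ∑ i, |lam i| * opNorm' Δ := by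
    refine Finset.sum_le_sum fun i _ => ?_
    set q : ℝ := (fun k => hB.eigenvectorBasis i k) ⬝ᵥ (Δ *ᵥ fun k =>
      hB.eigenvectorBasis i k) with hqdef
    calc lam i * q ≤ |lam i * q| := le_abs_self _
      _ = |lam i| * |q| := abs_mul _ _
      _ ≤ |lam i| * opNorm' Δ := mul_le_mul_of_nonneg_left (hq i) (abs_nonneg _)
  refine le_trans step1 ?_
  rw [← Finset.sum_mul, mul_comm _ (opNorm' Δ)]
  refine mul_le_mul_of_nonneg_left ?_ (opNorm_nonneg' Δ)
  -- ∑ |lam i| ≤ √r * √(∑ lam²)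
  have hsupp : ∑ i, |lam i| = ∑ i ∈ Finset.univ.filter (fun i => lam i ≠ 0), |lam i| := by
    rw [Finset.sum_filter_of_ne]
    intro i _ h
    by_contra hc
    exact h (by simpa [abs_eq_zero] using hc)
  have hcard : ((Finset.univ.filter (fun i => lam i ≠ 0)).card : ℝ) ≤ (r : ℝ) := by
    have : (Finset.univ.filter (fun i => lam i ≠ 0)).card = B.rank := by
      rw [hB.rank_eq_card_non_zero_eigs, Fintype.card_subtype]
    calc ((Finset.univ.filter (fun i => lam i ≠ 0)).card : ℝ) = (B.rank : ℝ) := by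
          exact_mod_cast congrArg (Nat.cast (R := ℝ)) this
      _ ≤ (r : ℝ) := Nat.cast_le.mpr hr
  have hCS : (∑ i ∈ Finset.univ.filter (fun i => lam i ≠ 0), |lam i|) ^ 2
      ≤ ((Finset.univ.filter (fun i => lam i ≠ 0)).card : ℝ) * ∑ i, lam i ^ 2 := by
    have := Finset.sum_mul_sq_le_sq_mul_sq (Finset.univ.filter (fun i => lam i ≠ 0))
      (fun _ => (1 : ℝ)) (fun i => |lam i|)
    simp only [one_mul, one_pow, Finset.sum_const, nsmul_eq_mul, mul_one] at this
    refine le_trans this (mul_le_mul_of_nonneg_left ?_ (Nat.cast_nonneg _))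
    calc ∑ i ∈ Finset.univ.filter (fun i => lam i ≠ 0), |lam i| ^ 2
        = ∑ i ∈ Finset.univ.filter (fun i => lam i ≠ 0), lam i ^ 2 := by
          exact Finset.sum_congr rfl fun i _ => sq_abs _
      _ ≤ ∑ i, lam i ^ 2 := Finset.sum_le_sum_of_subset_of_nonneg
          (Finset.filter_subset _ _) (fun i _ _ => sq_nonneg _)
  have hsum_sq : Matrix.trace (B * B) = ∑ i, lam i ^ 2 := trace_mul_self_eq_sum_sq hB
  rw [hsupp, hsum_sq]
  have hL : 0 ≤ ∑ i ∈ Finset.univ.filter (fun i => lam i ≠ 0), |lam i| :=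
    Finset.sum_nonneg fun i _ => abs_nonneg _
  calc ∑ i ∈ Finset.univ.filter (fun i => lam i ≠ 0), |lam i|
      = Real.sqrt ((∑ i ∈ Finset.univ.filter (fun i => lam i ≠ 0), |lam i|) ^ 2) :=
        (Real.sqrt_sq hL).symm
    _ ≤ Real.sqrt ((r : ℝ) * ∑ i, lam i ^ 2) := Real.sqrt_le_sqrt
        (le_trans hCS (mul_le_mul_of_nonneg_right hcard
          (Finset.sum_nonneg fun i _ => sq_nonneg _)))
    _ = Real.sqrt r * Real.sqrt (∑ i, lam i ^ 2) := Real.sqrt_mul (Nat.cast_nonneg _) _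

end key

section isom
variable {p q : Type*} [Fintype p] [Fintype q] [DecidableEq q]

lemma isometry_sq (X : Matrix p q ℝ) (c : ℝ) (hX : Xᵀ * X = c • (1 : Matrix q q ℝ))
    (v : q → ℝ) : ∑ k, (X *ᵥ v) k ^ 2 = c * ∑ j, v j ^ 2 := by
  have h1 : ∑ k, (X *ᵥ v) k ^ 2 = (X *ᵥ v) ⬝ᵥ (X *ᵥ v) := by
    simp [dotProduct, pow_two]
  have h2 : v ⬝ᵥ (Xᵀ *ᵥ (X *ᵥ v)) = (X *ᵥ v) ⬝ᵥ (X *ᵥ v) := by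
    rw [dotProduct_mulVec, vecMul_transpose]
  rw [h1, ← h2, mulVec_mulVec, hX, smul_mulVec, one_mulVec, dotProduct_smul]
  simp [dotProduct, pow_two, smul_eq_mul]

lemma contraction_sq (X : Matrix p q ℝ) (c : ℝ) (hc0 : 0 ≤ c) (hX : Xᵀ * X = c • (1 : Matrix q q ℝ))
    (y : p → ℝ) : ∑ k, (Xᵀ *ᵥ y) k ^ 2 ≤ c * ∑ j, y j ^ 2 := by
  set z : q → ℝ := Xᵀ *ᵥ y with hz
  have hS : ∑ k, z k ^ 2 = (X *ᵥ z) ⬝ᵥ y := by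
    have : z ⬝ᵥ (Xᵀ *ᵥ y) = (X *ᵥ z) ⬝ᵥ y := by
      rw [dotProduct_mulVec, vecMul_transpose]
    rw [← this, ← hz]
    simp [dotProduct, pow_two]
  have hCS : ((X *ᵥ z) ⬝ᵥ y) ^ 2 ≤ (∑ k, (X *ᵥ z) k ^ 2) * ∑ k, y k ^ 2 := by
    simpa [dotProduct] using
      Finset.sum_mul_sq_le_sq_mul_sq Finset.univ (fun k => (X *ᵥ z) k) y
  rw [isometry_sq X c hX z] at hCS
  have hSz : 0 ≤ ∑ k, z k ^ 2 := Finset.sum_nonneg fun k _ => sq_nonneg _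
  rcases eq_or_lt_of_le hSz with h | h
  · rw [← h]
    positivity
  · nlinarith [hS, hCS]

end isom

lemma matrix_rank_neg_le {m' : Type*} [Fintype m'] (P : Matrix m' m' ℝ) :
    (-P).rank ≤ P.rank := by
  rw [Matrix.rank, Matrix.rank]
  refine Submodule.finrank_mono ?_
  rintro _ ⟨x, rfl⟩
  exact ⟨-x, by simp [Matrix.mulVecLin_apply, Matrix.neg_mulVec, Matrix.mulVec_neg]⟩

lemma opNorm_eq_opNorm' {m : Type*} [Fintype m] [DecidableEq m] (A : Matrix m m ℝ) :
    opNorm A = opNorm' A := rfl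

lemma sqrt_lower_bound (nR a x : ℝ) (hn : 0 < nR) (ha : 0 ≤ a) (hcase : a < nR ^ 2)
    (hx : nR ^ 2 - a / 2 ≤ x) : nR - a / nR ≤ Real.sqrt x := by
  have hdiv : a / nR * nR = a := div_mul_cancel₀ a (ne_of_gt hn)
  have hu0 : 0 ≤ a / nR := div_nonneg ha hn.le
  have hge0 : 0 ≤ nR - a / nR := by
    rw [sub_nonneg, div_le_iff₀ hn]; nlinarith
  have hlow : (nR - a / nR) ^ 2 ≤ x := by nlinarith [mul_pos hn hn, sq_nonneg (a / nR)]
  calc nR - a / nR = Real.sqrt ((nR - a / nR) ^ 2) := (Real.sqrt_sq hge0).symm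
    _ ≤ Real.sqrt x := Real.sqrt_le_sqrt hlow

/-- Under the ℓ₂-estimation setting, every singular value of `G*ᵀG` lies in
`[n − 8d‖Δ‖²/n, n]`. -/
theorem stmt_8 (n d : ℕ) (G Gs : Matrix (Fin n × Fin d) (Fin d) ℝ)
    (Δ C : Matrix (Fin n × Fin d) (Fin n × Fin d) ℝ)
    (hG : Gᵀ * G = (n : ℝ) • (1 : Matrix (Fin d) (Fin d) ℝ))
    (hGs : ∀ i, (blk Gs i)ᵀ * blk Gs i = 1)
    (hΔ : Δᵀ = Δ) (hC : C = Gs * Gsᵀ + Δ)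
    (hopt : Matrix.trace (Gᵀ * C * G) ≥ Matrix.trace (Gsᵀ * C * Gs)) :
    ∀ l : Fin d,
      (n : ℝ) - 8 * d * opNorm Δ ^ 2 / n ≤ singularValues (Gsᵀ * G) l ∧
      singularValues (Gsᵀ * G) l ≤ n := by
  classical
  set M : Matrix (Fin d) (Fin d) ℝ := Gsᵀ * G with hMdef
  have hM : (Mᴴ * M).IsHermitian := Matrix.isHermitian_conjTranspose_mul_self M
  set μ : Fin d → ℝ := hM.eigenvalues with hμdef
  have hconj : Mᴴ = Mᵀ := Matrix.conjTranspose_eq_transpose_of_trivial M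
  set ω : ℝ := opNorm Δ with hωdef
  have hω0 : 0 ≤ ω := norm_nonneg _
  -- Gs is also an isometry (times √n)
  have hGsGs : Gsᵀ * Gs = (n : ℝ) • (1 : Matrix (Fin d) (Fin d) ℝ) := by
    ext a b
    rw [Matrix.mul_apply, Fintype.sum_prod_type]
    have hinner : ∀ i : Fin n, ∑ c, Gsᵀ a (i, c) * Gs (i, c) b
        = (1 : Matrix (Fin d) (Fin d) ℝ) a b := by
      intro i
      rw [← hGs i, Matrix.mul_apply]
      simp [blk, Matrix.transpose_apply]
    rw [Finset.sum_congr rfl fun i _ => hinner i]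
    simp [Matrix.smul_apply, mul_comm]
  -- each eigenvalue is in [0, n²]
  have hμ0 : ∀ l, 0 ≤ μ l := fun l =>
    (Matrix.posSemidef_conjTranspose_mul_self M).eigenvalues_nonneg l
  have hμn : ∀ l, μ l ≤ (n : ℝ) ^ 2 := by
    intro l
    have hev := hM.eigenvalues_eq l
    set v : Fin d → ℝ := fun k => hM.eigenvectorBasis l k with hv
    have hval : μ l = v ⬝ᵥ ((Mᴴ * M) *ᵥ v) := by
      exact hev
    have hquad : v ⬝ᵥ ((Mᴴ * M) *ᵥ v) = ∑ k, (M *ᵥ v) k ^ 2 := by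
      rw [hconj, ← Matrix.mulVec_mulVec, Matrix.dotProduct_mulVec, Matrix.vecMul_transpose]
      simp [dotProduct, pow_two]
    have hMv : M *ᵥ v = Gsᵀ *ᵥ (G *ᵥ v) := by
      rw [hMdef, ← Matrix.mulVec_mulVec]
    have hstep : ∑ k, (M *ᵥ v) k ^ 2 ≤ (n : ℝ) * ∑ k, (G *ᵥ v) k ^ 2 := by
      rw [hMv]
      exact contraction_sq Gs (n : ℝ) (Nat.cast_nonneg n) hGsGs (G *ᵥ v)
    have hGv : ∑ k, (G *ᵥ v) k ^ 2 = (n : ℝ) * ∑ j, v j ^ 2 := isometry_sq G (n : ℝ) hG v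
    have hunit : ∑ j, v j ^ 2 = 1 := eigvec_sq_sum hM l
    rw [hval, hquad]
    calc ∑ k, (M *ᵥ v) k ^ 2 ≤ (n : ℝ) * ∑ k, (G *ᵥ v) k ^ 2 := hstep
      _ = (n : ℝ) ^ 2 := by rw [hGv, hunit]; ring
  -- the error quantity E
  set E : ℝ := (n : ℝ) ^ 2 * d - Matrix.trace (Mᴴ * M) with hEdef
  have htraceμ : Matrix.trace (Mᴴ * M) = ∑ l, μ l := trace_eq_sum_eigenvalues hM
  have hE_eq : E = ∑ l, ((n : ℝ) ^ 2 - μ l) := by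
    rw [hEdef, htraceμ, Finset.sum_sub_distrib]
    simp [mul_comm]
  have hE0 : 0 ≤ E := by
    rw [hE_eq]
    exact Finset.sum_nonneg fun l _ => by linarith [hμn l]
  have hEl : ∀ l, (n : ℝ) ^ 2 - μ l ≤ E := by
    intro l
    rw [hE_eq]
    exact Finset.single_le_sum (f := fun k => (n : ℝ) ^ 2 - μ k)
      (fun k _ => by show (0:ℝ) ≤ (n : ℝ) ^ 2 - μ k; linarith [hμn k]) (Finset.mem_univ l)
  -- B = GGᵀ − GsGsᵀ
  set B : Matrix (Fin n × Fin d) (Fin n × Fin d) ℝ := G * Gᵀ - Gs * Gsᵀ with hBdef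
  have hE_le : E ≤ Matrix.trace (Δ * B) := by
    have e1 : Gᵀ * C * G = Mᴴ * M + Gᵀ * Δ * G := by
      rw [hconj]
      simp only [hC, hMdef, Matrix.transpose_mul, Matrix.transpose_transpose,
        Matrix.mul_add, Matrix.add_mul, Matrix.mul_assoc]
    have e2 : Gsᵀ * C * Gs = ((n : ℝ) • (1 : Matrix (Fin d) (Fin d) ℝ))
        * ((n : ℝ) • (1 : Matrix (Fin d) (Fin d) ℝ)) + Gsᵀ * Δ * Gs := by
      have hassoc : Gsᵀ * (Gs * Gsᵀ) * Gs = (Gsᵀ * Gs) * (Gsᵀ * Gs) := by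
        simp only [Matrix.mul_assoc]
      rw [hC, Matrix.mul_add, Matrix.add_mul, hassoc, hGsGs]
    have e3 : Matrix.trace (((n : ℝ) • (1 : Matrix (Fin d) (Fin d) ℝ))
        * ((n : ℝ) • (1 : Matrix (Fin d) (Fin d) ℝ))) = (n : ℝ) ^ 2 * d := by
      rw [Matrix.smul_mul, Matrix.mul_smul, Matrix.one_mul, smul_smul, Matrix.trace_smul,
        Matrix.trace_one]
      simp [pow_two]
    have htr1 : Matrix.trace (Gᵀ * Δ * G) = Matrix.trace (Δ * (G * Gᵀ)) := by
      rw [Matrix.trace_mul_comm (Gᵀ * Δ) G, ← Matrix.mul_assoc, Matrix.trace_mul_comm (G * Gᵀ) Δ]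
    have htr2 : Matrix.trace (Gsᵀ * Δ * Gs) = Matrix.trace (Δ * (Gs * Gsᵀ)) := by
      rw [Matrix.trace_mul_comm (Gsᵀ * Δ) Gs, ← Matrix.mul_assoc,
        Matrix.trace_mul_comm (Gs * Gsᵀ) Δ]
    have hB' : Matrix.trace (Δ * B) = Matrix.trace (Δ * (G * Gᵀ))
        - Matrix.trace (Δ * (Gs * Gsᵀ)) := by
      rw [hBdef, Matrix.mul_sub, Matrix.trace_sub]
    rw [e1] at hopt
    rw [e2] at hopt
    rw [Matrix.trace_add, Matrix.trace_add, e3, htr1, htr2] at hopt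
    rw [hB']
    rw [hEdef]
    linarith [hopt]
  have hBB : Matrix.trace (B * B) = 2 * E := by
    set Q : Matrix (Fin n × Fin d) (Fin n × Fin d) ℝ := G * Gᵀ with hQdef
    set P : Matrix (Fin n × Fin d) (Fin n × Fin d) ℝ := Gs * Gsᵀ with hPdef
    have hexp : B * B = Q * Q - Q * P - (P * Q - P * P) := by
      rw [hBdef]
      noncomm_ring
    have tQQ : Matrix.trace (Q * Q) = (n : ℝ) ^ 2 * d := by
      have h2 : Matrix.trace (Q * Q) = Matrix.trace ((Gᵀ * G) * (Gᵀ * G)) := by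
        rw [hQdef, Matrix.mul_assoc, Matrix.trace_mul_comm G (Gᵀ * (G * Gᵀ))]
        simp only [Matrix.mul_assoc]
      rw [h2, hG, Matrix.smul_mul, Matrix.mul_smul, Matrix.one_mul, smul_smul,
        Matrix.trace_smul, Matrix.trace_one]
      simp [pow_two]
    have tPP : Matrix.trace (P * P) = (n : ℝ) ^ 2 * d := by
      have h2 : Matrix.trace (P * P) = Matrix.trace ((Gsᵀ * Gs) * (Gsᵀ * Gs)) := by
        rw [hPdef, Matrix.mul_assoc, Matrix.trace_mul_comm Gs (Gsᵀ * (Gs * Gsᵀ))]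
        simp only [Matrix.mul_assoc]
      rw [h2, hGsGs, Matrix.smul_mul, Matrix.mul_smul, Matrix.one_mul, smul_smul,
        Matrix.trace_smul, Matrix.trace_one]
      simp [pow_two]
    have tQP : Matrix.trace (Q * P) = Matrix.trace (Mᴴ * M) := by
      rw [hconj, hMdef, Matrix.transpose_mul, Matrix.transpose_transpose]
      rw [hQdef, hPdef, Matrix.mul_assoc, Matrix.trace_mul_comm G (Gᵀ * (Gs * Gsᵀ))]
      simp only [Matrix.mul_assoc]
    have tPQ : Matrix.trace (P * Q) = Matrix.trace (Mᴴ * M) := by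
      rw [hconj, hMdef, Matrix.transpose_mul, Matrix.transpose_transpose]
      rw [hPdef, hQdef, Matrix.mul_assoc, Matrix.trace_mul_comm Gs (Gsᵀ * (G * Gᵀ))]
      rw [show (Gsᵀ * (G * Gᵀ)) * Gs = (Gsᵀ * G) * (Gᵀ * Gs) from by simp only [Matrix.mul_assoc]]
      rw [Matrix.trace_mul_comm]
    rw [hexp, Matrix.trace_sub, Matrix.trace_sub, Matrix.trace_sub, tQQ, tPP, tQP, tPQ, hEdef]
    ring
  have hBrank : B.rank ≤ 2 * d := by
    have hQ : (G * Gᵀ).rank ≤ d := by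
      refine le_trans (Matrix.rank_mul_le_left G Gᵀ) ?_
      simpa using Matrix.rank_le_card_width G
    have hP : (Gs * Gsᵀ).rank ≤ d := by
      refine le_trans (Matrix.rank_mul_le_left Gs Gsᵀ) ?_
      simpa using Matrix.rank_le_card_width Gs
    calc B.rank = (G * Gᵀ + -(Gs * Gsᵀ)).rank := by rw [hBdef, sub_eq_add_neg]
      _ ≤ (G * Gᵀ).rank + (-(Gs * Gsᵀ)).rank := matrix_rank_add_le _ _
      _ ≤ (G * Gᵀ).rank + (Gs * Gsᵀ).rank := by
          have := matrix_rank_neg_le (Gs * Gsᵀ)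
          omega
      _ ≤ 2 * d := by omega
  have hBherm : B.IsHermitian := by
    have h1 : (G * Gᵀ).IsHermitian := by
      rw [← Matrix.conjTranspose_eq_transpose_of_trivial G]
      exact Matrix.isHermitian_mul_conjTranspose_self G
    have h2 : (Gs * Gsᵀ).IsHermitian := by
      rw [← Matrix.conjTranspose_eq_transpose_of_trivial Gs]
      exact Matrix.isHermitian_mul_conjTranspose_self Gs
    exact h1.sub h2
  -- E ≤ 4 d ω²
  have hE4 : E ≤ 4 * d * ω ^ 2 := by
    have hkey := key_trace_bound B Δ hBherm (2 * d) hBrank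
    rw [hBB] at hkey
    rw [← opNorm_eq_opNorm'] at hkey
    have hprod : Real.sqrt ((2 * d : ℕ) : ℝ) * Real.sqrt (2 * E)
        = 2 * (Real.sqrt d * Real.sqrt E) := by
      push_cast
      rw [Real.sqrt_mul (by norm_num : (0:ℝ) ≤ 2) (d : ℝ),
        Real.sqrt_mul (by norm_num : (0:ℝ) ≤ 2) E]
      rw [show Real.sqrt 2 * Real.sqrt (d : ℝ) * (Real.sqrt 2 * Real.sqrt E)
        = (Real.sqrt 2 * Real.sqrt 2) * (Real.sqrt (d : ℝ) * Real.sqrt E) from by ring]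
      rw [Real.mul_self_sqrt (by norm_num : (0:ℝ) ≤ 2)]
    rw [hprod] at hkey
    have hEb : E ≤ ω * (2 * (Real.sqrt d * Real.sqrt E)) := le_trans hE_le hkey
    have hsE : Real.sqrt E ^ 2 = E := Real.sq_sqrt hE0
    have hsd : Real.sqrt (d : ℝ) ^ 2 = (d : ℝ) := Real.sq_sqrt (Nat.cast_nonneg d)
    nlinarith [sq_nonneg (Real.sqrt E - 2 * ω * Real.sqrt (d : ℝ)),
      Real.sqrt_nonneg E, Real.sqrt_nonneg (d : ℝ), hω0]
  -- conclusion
  intro l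
  have hsv : singularValues (Gsᵀ * G) l = Real.sqrt (μ l) := rfl
  constructor
  · rw [hsv]
    rcases Nat.eq_zero_or_pos n with hn | hn
    · subst hn
      simp only [Nat.cast_zero, div_zero, sub_zero]
      exact Real.sqrt_nonneg _
    have hnR : (0 : ℝ) < n := by exact_mod_cast hn
    set a : ℝ := 8 * d * ω ^ 2 with hadef
    have ha0 : 0 ≤ a := by positivity
    rcases le_or_gt ((n : ℝ) ^ 2) a with hcase | hcase
    · have : (n : ℝ) - a / n ≤ 0 := by
        rw [sub_nonpos, le_div_iff₀ hnR]
        nlinarith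
      exact le_trans this (Real.sqrt_nonneg _)
    · have hμl : (n : ℝ) ^ 2 - a / 2 ≤ μ l := by
        have h1 := hEl l
        have h4 : 4 * (d : ℝ) * ω ^ 2 = a / 2 := by rw [hadef]; ring
        linarith [hE4]
      exact sqrt_lower_bound (n : ℝ) a (μ l) hnR ha0 hcase hμl
  · rw [hsv]
    calc Real.sqrt (μ l) ≤ Real.sqrt ((n : ℝ) ^ 2) := Real.sqrt_le_sqrt (hμn l)
      _ = n := Real.sqrt_sq (Nat.cast_nonneg n)
end

section
/- Let α ∈ (0,1), let f̃(X) = tr(XᵀCX) with ∇f̃ Lipschitz of constant L on ℝ^{nd×d}, let G ∈ O(d)ⁿ, let ξ be a tangent vector at G, and set G⁺ = Exp_G(tξ) (blockwise matrix exponential retraction). Then f̃(G⁺) − f̃(G) ≥ t⟨∇f̃(G), ξ⟩ − (√d/2)‖∇f̃(G)‖_∞ t²‖ξ‖_F² − (L/2) t²‖ξ‖_F², where ‖∇f̃(G)‖_∞ = max_i ‖(∇f̃(G))ᵢ‖_F. In particular, if ξ = grad f̄(G) is the Riemannian gradient (so ⟨∇f̃(G), ξ⟩ = ‖ξ‖_F²)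 and t ≤ (1−α)/(nd + √d‖∇f̃(G)‖_∞/2 + L/2) appropriately, then f̃(G⁺) − f̃(G) ≥ α t ‖grad f̄(G)‖_F². -/
open Matrix

/-- Stack `n` blocks `B i ∈ ℝ^{d×d}` into a block-column matrix in `ℝ^{nd×d}`. -/
def blockStack {n d : ℕ} (B : Fin n → Matrix (Fin d) (Fin d) ℝ) :
    Matrix (Fin n × Fin d) (Fin d) ℝ :=
  Matrix.of fun p b => B p.1 p.2 b

section Aux
set_option linter.unusedSectionVars false
attribute [local instance] Matrix.frobeniusSeminormedAddCommGroup
  Matrix.frobeniusNormedAddCommGroup Matrix.frobeniusNormedSpace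
  Matrix.frobeniusNormedRing Matrix.frobeniusNormedAlgebra

variable {m n : Type*} [Fintype m] [Fintype n] [DecidableEq m] [DecidableEq n]

lemma frobNorm_eq_norm (A : Matrix m n ℝ) : frobNorm A = ‖A‖ := by
  rw [Matrix.frobenius_norm_def, frobNorm, Real.sqrt_eq_rpow]
  congr 1
  · congr 1; ext i; congr 1; ext j
    rw [Real.rpow_two, Real.norm_eq_abs, sq_abs]

lemma frobNorm_nonneg (A : Matrix m n ℝ) : 0 ≤ frobNorm A := Real.sqrt_nonneg _

lemma frobNorm_sq (A : Matrix m n ℝ) : frobNorm A ^ 2 = ∑ i, ∑ j, (A i j) ^ 2 :=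
  Real.sq_sqrt (by positivity)

lemma frobNorm_smul (c : ℝ) (A : Matrix m n ℝ) : frobNorm (c • A) = |c| * frobNorm A := by
  rw [frobNorm_eq_norm, frobNorm_eq_norm, norm_smul, Real.norm_eq_abs]

lemma frobNorm_sq_eq_trace (A : Matrix m n ℝ) :
    frobNorm A ^ 2 = Matrix.trace (Aᵀ * A) := by
  rw [frobNorm_sq, Matrix.trace]
  simp_rw [Matrix.diag, Matrix.mul_apply, Matrix.transpose_apply, sq]
  exact Finset.sum_comm

lemma frobNorm_mul_orth (B : Matrix m n ℝ) (Q : Matrix n n ℝ) (hQ : Q * Qᵀ = 1) :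
    frobNorm (B * Q) = frobNorm B := by
  have h : frobNorm (B * Q) ^ 2 = frobNorm B ^ 2 := by
    rw [frobNorm_sq_eq_trace, frobNorm_sq_eq_trace, Matrix.transpose_mul,
      Matrix.trace_mul_comm, Matrix.mul_assoc B Q, ← Matrix.mul_assoc Q Qᵀ, hQ,
      Matrix.one_mul, Matrix.trace_mul_comm]
  have := frobNorm_nonneg (B * Q); have := frobNorm_nonneg B
  nlinarith

lemma frobNorm_orth_mul (Q : Matrix m m ℝ) (B : Matrix m n ℝ) (hQ : Qᵀ * Q = 1) :
    frobNorm (Q * B) = frobNorm B := by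
  have h : frobNorm (Q * B) ^ 2 = frobNorm B ^ 2 := by
    rw [frobNorm_sq_eq_trace, frobNorm_sq_eq_trace, Matrix.transpose_mul,
      Matrix.mul_assoc, ← Matrix.mul_assoc Qᵀ Q B, hQ, Matrix.one_mul]
  have := frobNorm_nonneg (Q * B); have := frobNorm_nonneg B
  nlinarith

lemma trace_abs_le (A B : Matrix m n ℝ) :
    |Matrix.trace (Aᵀ * B)| ≤ frobNorm A * frobNorm B := by
  have htr : Matrix.trace (Aᵀ * B) = ∑ p : m × n, A p.1 p.2 * B p.1 p.2 := by
    rw [Matrix.trace]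
    simp_rw [Matrix.diag, Matrix.mul_apply, Matrix.transpose_apply, Fintype.sum_prod_type]
    exact Finset.sum_comm
  have hcs := Finset.sum_mul_sq_le_sq_mul_sq Finset.univ (fun p : m × n => A p.1 p.2)
      (fun p : m × n => B p.1 p.2)
  have hA : frobNorm A ^ 2 = ∑ p : m × n, A p.1 p.2 ^ 2 := by
    rw [frobNorm_sq, Fintype.sum_prod_type]
  have hB : frobNorm B ^ 2 = ∑ p : m × n, B p.1 p.2 ^ 2 := by
    rw [frobNorm_sq, Fintype.sum_prod_type]
  have h1 : |Matrix.trace (Aᵀ * B)| ^ 2 ≤ (frobNorm A * frobNorm B) ^ 2 := by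
    rw [sq_abs, htr, mul_pow, hA, hB]; exact hcs
  calc |Matrix.trace (Aᵀ * B)| = Real.sqrt (|Matrix.trace (Aᵀ * B)| ^ 2) :=
        (Real.sqrt_sq (abs_nonneg _)).symm
    _ ≤ Real.sqrt ((frobNorm A * frobNorm B) ^ 2) := Real.sqrt_le_sqrt h1
    _ = frobNorm A * frobNorm B :=
        Real.sqrt_sq (mul_nonneg (frobNorm_nonneg A) (frobNorm_nonneg B))

open NormedSpace in
lemma exp_orth (A : Matrix m m ℝ) (hA : Aᵀ = -A) : exp A * (exp A)ᵀ = 1 := by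
  rw [← Matrix.exp_transpose, hA, ← Matrix.exp_add_of_commute A (-A) (Commute.refl A).neg_right]
  simp

open NormedSpace in
lemma exp_sub_one_bound (A : Matrix m m ℝ) (hA : Aᵀ = -A) :
    ∀ s ∈ Set.Icc (0:ℝ) 1, ‖exp (s • A) - 1‖ ≤ ‖A‖ * s := by
  have hskew : ∀ s : ℝ, (s • A)ᵀ = -(s • A) := fun s => by
    rw [Matrix.transpose_smul, hA, smul_neg]
  have h := norm_image_sub_le_of_norm_deriv_le_segment'
    (f := fun u : ℝ => exp (u • A)) (f' := fun u : ℝ => A * exp (u • A))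
    (a := 0) (b := 1) (C := ‖A‖)
    (fun x _ => (hasDerivAt_exp_smul_const' (𝕂 := ℝ) A x).hasDerivWithinAt)
    (fun x _ => by
      rw [← frobNorm_eq_norm, ← frobNorm_eq_norm,
        frobNorm_mul_orth A _ (exp_orth _ (hskew x))])
  intro s hs
  have := h s hs
  simpa using this

open NormedSpace in
lemma exp_taylor2 (A : Matrix m m ℝ) (hA : Aᵀ = -A) :
    ‖exp A - 1 - A‖ ≤ ‖A‖ ^ 2 / 2 := by
  have hf' : ∀ x : ℝ, HasDerivAt (fun u : ℝ => exp (u • A) - 1 - u • A)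
      (A * (exp (x • A) - 1)) x := by
    intro x
    have h1 := hasDerivAt_exp_smul_const' (𝕂 := ℝ) A x
    have h2 : HasDerivAt (fun u : ℝ => u • A) A x := by
      have := (hasDerivAt_id x).smul_const A
      simp only [id, one_smul] at this
      exact this
    have := (h1.sub_const 1).sub h2
    rw [mul_sub, Matrix.mul_one]; exact this
  have hB : ∀ x : ℝ, HasDerivAt (fun s : ℝ => ‖A‖ ^ 2 / 2 * s ^ 2) (‖A‖ ^ 2 * x) x := by
    intro x
    have := (hasDerivAt_pow 2 x).const_mul (‖A‖ ^ 2 / 2)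
    rw [show ‖A‖ ^ 2 * x = ‖A‖ ^ 2 / 2 * (((2:ℕ):ℝ) * x ^ (2 - 1)) by
      rw [show (2:ℕ) - 1 = 1 from rfl, pow_one]; push_cast; ring]
    exact this
  have h := image_norm_le_of_norm_deriv_right_le_deriv_boundary
    (f := fun u : ℝ => exp (u • A) - 1 - u • A)
    (f' := fun u : ℝ => A * (exp (u • A) - 1)) (a := 0) (b := 1)
    (fun x _ => ((hf' x).continuousAt).continuousWithinAt)
    (fun x _ => (hf' x).hasDerivWithinAt)
    (B := fun s => ‖A‖ ^ 2 / 2 * s ^ 2) (B' := fun s => ‖A‖ ^ 2 * s)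
    (by simp) hB
    (fun x hx => by
      calc ‖A * (exp (x • A) - 1)‖ ≤ ‖A‖ * ‖exp (x • A) - 1‖ := norm_mul_le _ _
        _ ≤ ‖A‖ * (‖A‖ * x) := mul_le_mul_of_nonneg_left
              (exp_sub_one_bound A hA x ⟨hx.1, hx.2.le⟩) (norm_nonneg A)
        _ = ‖A‖ ^ 2 * x := by ring)
  have := h (Set.right_mem_Icc.2 zero_le_one)
  simpa using this

open NormedSpace in
lemma frob_exp_sub_one (A : Matrix m m ℝ) (hA : Aᵀ = -A) :
    frobNorm (exp A - 1) ≤ frobNorm A := by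
  have := exp_sub_one_bound A hA 1 ⟨zero_le_one, le_refl 1⟩
  rw [one_smul] at this
  simpa [frobNorm_eq_norm] using this

open NormedSpace in
lemma frob_exp_taylor2 (A : Matrix m m ℝ) (hA : Aᵀ = -A) :
    frobNorm (exp A - 1 - A) ≤ frobNorm A ^ 2 / 2 := by
  have := exp_taylor2 A hA
  simpa [frobNorm_eq_norm] using this

end Aux

section Blocks
variable {n d : ℕ}

lemma blk_blockStack (B : Fin n → Matrix (Fin d) (Fin d) ℝ) (i : Fin n) :
    blk (blockStack B) i = B i := by
  ext a b; rfl

lemma trace_blocks (A B : Matrix (Fin n × Fin d) (Fin d) ℝ) :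
    Matrix.trace (Aᵀ * B) = ∑ i, Matrix.trace ((blk A i)ᵀ * blk B i) := by
  simp only [Matrix.trace, Matrix.diag, Matrix.mul_apply, Matrix.transpose_apply,
    blk, Matrix.of_apply]
  simp_rw [Fintype.sum_prod_type]
  exact Finset.sum_comm

lemma frobNorm_sq_blockStack (B : Fin n → Matrix (Fin d) (Fin d) ℝ) :
    frobNorm (blockStack B) ^ 2 = ∑ i, frobNorm (B i) ^ 2 := by
  simp_rw [frobNorm_sq, blockStack, Matrix.of_apply, Fintype.sum_prod_type]

lemma trace_expand {ι κ : Type*} [Fintype ι] [Fintype κ] (C : Matrix ι ι ℝ) (hC : Cᵀ = C)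
    (G D : Matrix ι κ ℝ) :
    Matrix.trace ((G + D)ᵀ * C * (G + D)) - Matrix.trace (Gᵀ * C * G) =
      Matrix.trace (((2:ℝ) • (C * G))ᵀ * D) + Matrix.trace (Dᵀ * (C * D)) := by
  have e : Matrix.trace (Dᵀ * (C * G)) = Matrix.trace (Gᵀ * (C * D)) := by
    have h2 : (Gᵀ * (C * D))ᵀ = Dᵀ * (Cᵀ * G) := by
      rw [Matrix.transpose_mul, Matrix.transpose_mul, Matrix.transpose_transpose,
        Matrix.mul_assoc]
    rw [← Matrix.trace_transpose (Gᵀ * (C * D)), h2, hC]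
  simp only [Matrix.transpose_add, Matrix.add_mul, Matrix.mul_add, Matrix.trace_add,
    Matrix.transpose_smul, Matrix.smul_mul, Matrix.trace_smul, Matrix.transpose_mul,
    hC, smul_eq_mul, Matrix.mul_assoc]
  linarith [e]

end Blocks

set_option maxHeartbeats 1000000

/-- Ascent estimate along the blockwise exponential retraction for
`f̃(X) = tr(XᵀCX)` with `L`-Lipschitz Euclidean gradient `∇f̃(X) = 2CX`:
for `G ∈ O(d)ⁿ`, tangent direction `ξ = [G₁E₁;…;GₙEₙ]` and `G⁺ = Exp_G(tξ)`,
`f̃(G⁺) − f̃(G) ≥ t⟨∇f̃(G), ξ⟩ − (√d/2)‖∇f̃(G)‖_∞ t²‖ξ‖_F² − (L/2)t²‖ξ‖_F²`;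
in particular, if `ξ` is the Riemannian gradient (so `⟨∇f̃(G), ξ⟩ = ‖ξ‖_F²`) and
`t ≤ (1−α)/(nd + √d‖∇f̃(G)‖_∞/2 + L/2)`, then `f̃(G⁺) − f̃(G) ≥ αt‖ξ‖_F²`. -/
theorem stmt_18 (n d : ℕ) (α t L : ℝ) (hα : α ∈ Set.Ioo (0 : ℝ) 1) (ht : 0 ≤ t)
    (C : Matrix (Fin n × Fin d) (Fin n × Fin d) ℝ) (hC : Cᵀ = C)
    (hL : ∀ X Y : Matrix (Fin n × Fin d) (Fin d) ℝ,
      frobNorm ((2 : ℝ) • (C * X) - (2 : ℝ) • (C * Y)) ≤ L * frobNorm (X - Y))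
    (G : Matrix (Fin n × Fin d) (Fin d) ℝ)
    (hG : ∀ i, (blk G i)ᵀ * blk G i = 1 ∧ blk G i * (blk G i)ᵀ = 1)
    (E : Fin n → Matrix (Fin d) (Fin d) ℝ) (hE : ∀ i, (E i)ᵀ = -(E i)) :
    Matrix.trace ((blockStack fun i => blk G i * NormedSpace.exp (t • E i))ᵀ *
          C * (blockStack fun i => blk G i * NormedSpace.exp (t • E i))) -
        Matrix.trace (Gᵀ * C * G) ≥
      t * Matrix.trace (((2 : ℝ) • (C * G))ᵀ * blockStack fun i => blk G i * E i) -
        Real.sqrt d / 2 * (⨆ i : Fin n, frobNorm (blk ((2 : ℝ) • (C * G)) i)) *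
          t ^ 2 * frobNorm (blockStack fun i => blk G i * E i) ^ 2 -
        L / 2 * t ^ 2 * frobNorm (blockStack fun i => blk G i * E i) ^ 2 ∧
    (Matrix.trace (((2 : ℝ) • (C * G))ᵀ * blockStack fun i => blk G i * E i) =
        frobNorm (blockStack fun i => blk G i * E i) ^ 2 →
      t ≤ (1 - α) / ((n : ℝ) * d +
          Real.sqrt d * (⨆ i : Fin n, frobNorm (blk ((2 : ℝ) • (C * G)) i)) / 2 +
          L / 2) →
      Matrix.trace ((blockStack fun i => blk G i * NormedSpace.exp (t • E i))ᵀ *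
            C * (blockStack fun i => blk G i * NormedSpace.exp (t • E i))) -
          Matrix.trace (Gᵀ * C * G) ≥
        α * t * frobNorm (blockStack fun i => blk G i * E i) ^ 2) := by
  obtain ⟨hα0, hα1⟩ := hα
  rcases isEmpty_or_nonempty (Fin n × Fin d) with hemp | hne
  · -- degenerate case: no rows
    have hq : frobNorm (blockStack fun i => blk G i * E i) = 0 := by
      simp [frobNorm]
    have hT : ∀ (X Y : Matrix (Fin n × Fin d) (Fin d) ℝ),
        Matrix.trace (Xᵀ * C * Y) = 0 := by
      intro X Y
      simp [Matrix.trace, Matrix.mul_apply]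
    have hT2 : ∀ (X Y : Matrix (Fin n × Fin d) (Fin d) ℝ),
        Matrix.trace (Xᵀ * Y) = 0 := by
      intro X Y
      simp [Matrix.trace, Matrix.mul_apply]
    constructor
    · rw [hT, hT, hT2, hq]
      simp
    · intro _ _
      rw [hT, hT, hq]
      simp
  · -- main case
    have hn : 0 < n := Fin.pos_iff_nonempty.mpr ⟨hne.some.1⟩
    have hd : 0 < d := Fin.pos_iff_nonempty.mpr ⟨hne.some.2⟩
    -- names
    set Grad := (2 : ℝ) • (C * G) with hGrad
    set ξ := blockStack fun i => blk G i * E i with hξdef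
    set Qm : Fin n → Matrix (Fin d) (Fin d) ℝ := fun i => NormedSpace.exp (t • E i)
      with hQm
    set P := blockStack fun i => blk G i * Qm i with hPdef
    set M := ⨆ i : Fin n, frobNorm (blk Grad i) with hM
    set q := frobNorm ξ with hq
    have hskew : ∀ i, (t • E i)ᵀ = -(t • E i) := fun i => by
      rw [Matrix.transpose_smul, hE i, smul_neg]
    have hQorth : ∀ i, Qm i * (Qm i)ᵀ = 1 := fun i => exp_orth _ (hskew i)
    have hGo : ∀ i, (blk G i)ᵀ * blk G i = 1 := fun i => (hG i).1
    -- L ≥ 0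
    have hL0 : 0 ≤ L := by
      set X : Matrix (Fin n × Fin d) (Fin d) ℝ := Matrix.of fun _ _ => (1:ℝ) with hX
      haveI hnd : Nonempty (Fin d) := ⟨⟨0, hd⟩⟩
      have hfp : 0 < frobNorm (X - 0) := by
        rw [sub_zero, frobNorm]
        apply Real.sqrt_pos.2
        apply Finset.sum_pos _ Finset.univ_nonempty
        intro i _
        apply Finset.sum_pos _ Finset.univ_nonempty
        intro j _
        simp [hX]
      have h1 := hL X 0
      have h0 : (0:ℝ) ≤ L * frobNorm (X - 0) := le_trans (frobNorm_nonneg _) h1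
      nlinarith [h0, hfp]
    -- M ≥ 0 and bounds
    have hMi : ∀ i, frobNorm (blk Grad i) ≤ M := fun i => by
      rw [hM]
      exact le_ciSup (f := fun i => frobNorm (blk Grad i))
        (Set.Finite.bddAbove (Set.finite_range _)) i
    have hM0 : 0 ≤ M := le_trans (frobNorm_nonneg _) (hMi ⟨0, hn⟩)
    have hsqrtd : 1 ≤ Real.sqrt d := by
      rw [show (1:ℝ) = Real.sqrt 1 by simp]
      exact Real.sqrt_le_sqrt (by exact_mod_cast hd)
    -- the remainder blocks
    set S : Fin n → Matrix (Fin d) (Fin d) ℝ := fun i => Qm i - 1 - t • E i with hS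
    set R := blockStack fun i => blk G i * S i with hR
    -- decomposition of P - G
    have hblk : ∀ i, blk G i * Qm i - blk G i
        = t • (blk G i * E i) + blk G i * S i := by
      intro i
      have h1 : blk G i * S i = blk G i * Qm i - blk G i - t • (blk G i * E i) := by
        rw [hS]
        rw [Matrix.mul_sub, Matrix.mul_sub, Matrix.mul_one, Matrix.mul_smul]
      rw [h1]; abel
    have hΔ1 : P - G = blockStack fun i => blk G i * Qm i - blk G i := rfl
    have hΔ2 : P - G = t • ξ + R := by
      rw [hΔ1, funext hblk]; rfl
    have hΔ3 : P - G = blockStack fun i => blk G i * (Qm i - 1) := by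
      rw [hΔ1]
      have h : (fun i => blk G i * Qm i - blk G i)
          = fun i => blk G i * (Qm i - 1) :=
        funext fun i => by rw [Matrix.mul_sub, Matrix.mul_one]
      rw [h]
    -- norms
    have hξsq : q ^ 2 = ∑ i, frobNorm (E i) ^ 2 := by
      rw [hq, hξdef, frobNorm_sq_blockStack]
      exact Finset.sum_congr rfl fun i _ => by rw [frobNorm_orth_mul _ _ (hGo i)]
    have hq0 : 0 ≤ q := frobNorm_nonneg _
    have hΔsq : frobNorm (P - G) ^ 2 ≤ t ^ 2 * q ^ 2 := by
      rw [hΔ3, frobNorm_sq_blockStack, hξsq, Finset.mul_sum]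
      apply Finset.sum_le_sum
      intro i _
      have h1 : frobNorm (blk G i * (Qm i - 1)) = frobNorm (Qm i - 1) :=
        frobNorm_orth_mul _ _ (hGo i)
      have h2 : frobNorm (Qm i - 1) ≤ t * frobNorm (E i) := by
        have := frob_exp_sub_one (t • E i) (hskew i)
        rw [frobNorm_smul, abs_of_nonneg ht] at this
        exact this
      rw [h1]
      calc frobNorm (Qm i - 1) ^ 2 ≤ (t * frobNorm (E i)) ^ 2 :=
            pow_le_pow_left₀ (frobNorm_nonneg _) h2 2
        _ = t ^ 2 * frobNorm (E i) ^ 2 := by ring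
    -- quadratic remainder bound
    have hCΔ : frobNorm (C * (P - G)) ≤ L / 2 * frobNorm (P - G) := by
      have h1 := hL (P - G) 0
      rw [Matrix.mul_zero, smul_zero, sub_zero, sub_zero] at h1
      rw [frobNorm_smul] at h1
      norm_num at h1
      linarith
    have hquad : Matrix.trace ((P - G)ᵀ * (C * (P - G)))
        ≥ -(L / 2 * frobNorm (P - G) ^ 2) := by
      have h1 := trace_abs_le (P - G) (C * (P - G))
      have h2 := neg_abs_le (Matrix.trace ((P - G)ᵀ * (C * (P - G))))
      nlinarith [frobNorm_nonneg (P - G)]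
    -- gradient remainder bound
    have hSbound : ∀ i, frobNorm (S i) ≤ t ^ 2 * frobNorm (E i) ^ 2 / 2 := by
      intro i
      have := frob_exp_taylor2 (t • E i) (hskew i)
      rw [frobNorm_smul, abs_of_nonneg ht] at this
      calc frobNorm (S i) ≤ (t * frobNorm (E i)) ^ 2 / 2 := this
        _ = t ^ 2 * frobNorm (E i) ^ 2 / 2 := by ring
    have hgradR : Matrix.trace (Gradᵀ * R) ≥ -(M / 2 * t ^ 2 * q ^ 2) := by
      rw [hR, trace_blocks]
      simp only [blk_blockStack]
      have hterm : ∀ i ∈ Finset.univ, -(M * (t ^ 2 * frobNorm (E i) ^ 2) / 2)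
          ≤ Matrix.trace ((blk Grad i)ᵀ * (blk G i * S i)) := by
        intro i _
        have h1 := trace_abs_le (blk Grad i) (blk G i * S i)
        have h2 : frobNorm (blk G i * S i) = frobNorm (S i) :=
          frobNorm_orth_mul _ _ (hGo i)
        have h3 := hSbound i
        have h4 := hMi i
        have h5 := neg_abs_le (Matrix.trace ((blk Grad i)ᵀ * (blk G i * S i)))
        have h6 := frobNorm_nonneg (blk Grad i)
        have h7 := frobNorm_nonneg (S i)
        have h8 := frobNorm_nonneg (E i)
        nlinarith [sq_nonneg t, sq_nonneg (frobNorm (E i))]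
      have := Finset.sum_le_sum hterm
      calc ∑ i, Matrix.trace ((blk Grad i)ᵀ * (blk G i * S i))
          ≥ ∑ i, -(M * (t ^ 2 * frobNorm (E i) ^ 2) / 2) := this
        _ = -(M / 2 * t ^ 2 * q ^ 2) := by
            rw [hξsq, Finset.mul_sum, ← Finset.sum_neg_distrib]
            · congr 1; funext i; ring
    -- key expansion
    have hPG : G + (P - G) = P := by abel
    have hkey : Matrix.trace (Pᵀ * C * P) - Matrix.trace (Gᵀ * C * G)
        = Matrix.trace (Gradᵀ * (P - G))
          + Matrix.trace ((P - G)ᵀ * (C * (P - G))) := by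
      have := trace_expand C hC G (P - G)
      rw [hPG] at this
      exact this
    have hlin : Matrix.trace (Gradᵀ * (P - G))
        = t * Matrix.trace (Gradᵀ * ξ) + Matrix.trace (Gradᵀ * R) := by
      rw [hΔ2, Matrix.mul_add, Matrix.mul_smul, Matrix.trace_add, Matrix.trace_smul,
        smul_eq_mul]
    -- part 1
    have part1 : Matrix.trace (Pᵀ * C * P) - Matrix.trace (Gᵀ * C * G)
        ≥ t * Matrix.trace (Gradᵀ * ξ) - Real.sqrt d / 2 * M * t ^ 2 * q ^ 2
          - L / 2 * t ^ 2 * q ^ 2 := by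
      rw [hkey, hlin]
      have e1 : M / 2 * t ^ 2 * q ^ 2 ≤ Real.sqrt d / 2 * M * t ^ 2 * q ^ 2 := by
        nlinarith [mul_nonneg (mul_nonneg (sub_nonneg.2 hsqrtd) hM0)
          (mul_nonneg (sq_nonneg t) (sq_nonneg q))]
      have e2 : L / 2 * frobNorm (P - G) ^ 2 ≤ L / 2 * (t ^ 2 * q ^ 2) :=
        mul_le_mul_of_nonneg_left hΔsq (by linarith)
      linarith [hgradR, hquad]
    refine ⟨part1, ?_⟩
    -- part 2
    intro h1 h2
    set D := (n : ℝ) * d + Real.sqrt d * M / 2 + L / 2 with hD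
    clear_value D
    have hnd1 : (1:ℝ) ≤ (n : ℝ) * d := by
      have : (1:ℕ) ≤ n * d := Nat.one_le_iff_ne_zero.2 (Nat.mul_ne_zero hn.ne' hd.ne')
      exact_mod_cast this
    have hD1 : (1:ℝ) ≤ D := by
      have h3 : 0 ≤ Real.sqrt d * M / 2 := by positivity
      rw [hD]; linarith
    have hDpos : (0:ℝ) < D := lt_of_lt_of_le one_pos hD1
    have hDt : (Real.sqrt d * M / 2 + L / 2) * t ≤ 1 - α := by
      have h3 : (Real.sqrt d * M / 2 + L / 2) * t ≤ D * t := by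
        apply mul_le_mul_of_nonneg_right _ ht
        rw [hD]; linarith
      have h4 : D * t ≤ 1 - α := by
        rw [mul_comm]
        exact (le_div_iff₀ hDpos).mp h2
      linarith
    rw [h1] at part1
    clear_value q M
    have e3 : 0 ≤ t * q ^ 2 * (1 - α - (Real.sqrt d * M / 2 + L / 2) * t) :=
      mul_nonneg (mul_nonneg ht (sq_nonneg q)) (by linarith)
    nlinarith [part1]
end
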